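/- For every F ∈ 𝓕 and n ≥ 0, the quotient coker(ε_F : Δ^{n+1}F ⊗ P̄^{⊗(n+1)} → F), where ε_F is the counit of the adjunction between − ⊗ P̄^{⊗(n+1)} and Δ^{n+1}, is polynomial of degree at most n, and every morphism from F to a functor that is polynomial of degree at most n factors uniquely through this quotient. Consequently the inclusion of the full subcategory of polynomial functors of degree at most n into 𝓕 admits a left adjoint q_n, given by q_nF = coker(ε_F). -/

import Mathlib

open CategoryTheory CategoryTheory.Limits TensorProduct MonoidalCategory

noncomputable section

variable (p : ℕ) [Fact p.Prime]

/-- `k = F_p`. -/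
abbrev Kk (p : ℕ) : Type := ZMod p

/-- The category `𝓕` of functors from finite-dimensional `F_p`-vector spaces
to `F_p`-vector spaces. -/
abbrev FF (p : ℕ) [Fact p.Prime] := FGModuleCat.{0} (Kk p) ⥤ ModuleCat.{0} (Kk p)

/-- The functor `V ↦ V ⊕ k` on finite-dimensional vector spaces. -/
def addOne : FGModuleCat.{0} (Kk p) ⥤ FGModuleCat.{0} (Kk p) where
  obj V := FGModuleCat.of (Kk p) (V × Kk p)
  map f := FGModuleCat.ofHom (LinearMap.prodMap f.hom.hom (LinearMap.id : Kk p →ₗ[Kk p] Kk p))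
  map_id := by intros; ext x <;> rfl
  map_comp := by intros; ext x <;> rfl

/-- The natural inclusion `i_V : V → V ⊕ k`. -/
def inclOne : 𝟭 (FGModuleCat.{0} (Kk p)) ⟶ addOne p where
  app V := FGModuleCat.ofHom (LinearMap.inl (Kk p) V (Kk p) : V →ₗ[Kk p] V × Kk p)
  naturality := by intros; ext x; rfl

/-- The natural projection `V ⊕ k → V`. -/
def projOne : addOne p ⟶ 𝟭 (FGModuleCat.{0} (Kk p)) where
  app V := FGModuleCat.ofHom (LinearMap.fst (Kk p) V (Kk p) : V × Kk p →ₗ[Kk p] V)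
  naturality := by intros; ext x; rfl

/-- Precomposition with `V ↦ V ⊕ k`, i.e. `F ↦ (V ↦ F(V ⊕ k))`. -/
def preAdd : FF p ⥤ FF p := (Functor.whiskeringLeft _ _ _).obj (addOne p)

/-- The natural transformation `F ⟶ F(− ⊕ k)` induced by the inclusions `i_V`. -/
def unitPre : 𝟭 (FF p) ⟶ preAdd p where
  app F := Functor.whiskerRight (inclOne p) F
  naturality := by
    intro F G α
    ext V : 2
    exact (α.naturality ((inclOne p).app V)).symm

/-- The difference functor `Δ : 𝓕 → 𝓕`, the cokernel of `F ⟶ F(− ⊕ k)`. -/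
def Delta : FF p ⥤ FF p := cokernel (unitPre p)

/-- Iterates `Δ^n` of the difference functor. -/
def deltaIter : ℕ → (FF p ⥤ FF p)
  | 0 => 𝟭 (FF p)
  | n + 1 => deltaIter n ⋙ Delta p

/-- `F` is polynomial of degree at most `n` if `Δ^{n+1} F = 0`. -/
def IsPolyLE (n : ℕ) (F : FF p) : Prop := IsZero ((deltaIter p (n + 1)).obj F)



/-- The forgetful functor, i.e. the identity functor `Id ∈ 𝓕`. -/
def idFun : FF p := forget₂ (FGModuleCat.{0} (Kk p)) (ModuleCat.{0} (Kk p))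

/-- The constant functor with value `k`, i.e. the unit of `𝓕`. -/
def constK : FF p := (Functor.const _).obj (ModuleCat.of (Kk p) (Kk p))

/-- The functor `P ∈ 𝓕`, `V ↦ k[V]`. -/
def Pfun : FF p where
  obj V := ModuleCat.of (Kk p) ((V : Type) →₀ Kk p)
  map f := ModuleCat.ofHom (Finsupp.lmapDomain (Kk p) (Kk p) f)
  map_id V := by
    ext : 1
    apply Finsupp.lhom_ext
    intro a b
    simp [Finsupp.mapDomain_single]
  map_comp f g := by
    ext : 1
    apply Finsupp.lhom_ext
    intro a b
    simp [Finsupp.mapDomain_single]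

/-- The augmentation `P ⟶ k`, `[v] ↦ 1`. -/
def augP : Pfun p ⟶ constK p where
  app V := ModuleCat.ofHom (Finsupp.linearCombination (Kk p) (fun _ : (V : Type) => (1 : Kk p)))
  naturality := by
    intro V W f
    ext : 1
    apply Finsupp.lhom_ext
    intro a b
    simp [Pfun, constK]
    erw [LinearMap.comp_apply, Finsupp.lmapDomain_apply, Finsupp.mapDomain_single,
      Finsupp.linearCombination_single, Finsupp.linearCombination_single]


/-- The reduced functor `P̄ ∈ 𝓕`, the kernel of the augmentation `P ⟶ k`. -/
def Pbar : FF p := kernel (augP p)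

/-- The functor `I_W ∈ 𝓕`, `V ↦ (functions Hom(V,W) → k)`. -/
def Ifun (W : FGModuleCat.{0} (Kk p)) : FF p where
  obj V := ModuleCat.of (Kk p) ((V →ₗ[Kk p] W) → Kk p)
  map {V V'} f := ModuleCat.ofHom (LinearMap.funLeft (Kk p) (Kk p)
    (fun ℓ : (V' : Type _) →ₗ[Kk p] W => ℓ ∘ₗ (f.hom.hom : V →ₗ[Kk p] V')))
  map_id V := by ext φ; rfl
  map_comp f g := by ext φ; rfl

/-- The functor `I = I_k ∈ 𝓕`. -/
def Icfun : FF p := Ifun p (FGModuleCat.of (Kk p) (Kk p))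

/-- Evaluation at the zero homomorphism, `I ⟶ k`. -/
def evalZero : Icfun p ⟶ constK p where
  app V := ModuleCat.ofHom (LinearMap.proj (0 : V →ₗ[Kk p] Kk p))
  naturality := by
    intro V W f
    ext φ
    have : (0 : (W : Type) →ₗ[Kk p] Kk p) ∘ₗ (f.hom.hom : V →ₗ[Kk p] W) = 0 := by
      ext x; rfl
    exact congrArg φ this

/-- The reduced functor `Ī ∈ 𝓕` of functions vanishing at `0`. -/
def Ibar : FF p := kernel (evalZero p)


/-- The largest subspace of `F(V)` belonging to a subfunctor of `F` that is
polynomial of degree at most `n`; objectwise, this is the value `(p_n F)(V)`. -/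
def pSub (n : ℕ) (F : FF p) (V : FGModuleCat.{0} (Kk p)) :
    Submodule (Kk p) (F.obj V) :=
  ⨆ (A : FF p) (j : A ⟶ F) (_ : Mono j) (_ : IsPolyLE p n A),
    LinearMap.range (j.app V).hom


/-- Iterated objectwise tensor powers `A^{⊗n}` of an object of `𝓕`. -/
def objPow (p : ℕ) [Fact p.Prime] (A : FF p) : ℕ → FF p
  | 0 => 𝟙_ (FF p)
  | 1 => A
  | n + 2 => objPow p A (n + 1) ⊗ A

/-! ### Auxiliary lemmas -/

lemma preAdd_map_epi {F G : FF p} (f : F ⟶ G) [Epi f] : Epi ((preAdd p).map f) := by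
  have : ∀ V, Epi (((preAdd p).map f).app V) := by
    intro V
    exact (inferInstance : Epi (f.app ((addOne p).obj V)))
  exact NatTrans.epi_of_epi_app _

lemma preAdd_map_zero {F G : FF p} : (preAdd p).map (0 : F ⟶ G) = 0 := by
  ext V : 2
  simp [preAdd]
  rfl

lemma delta_map_epi {F G : FF p} (f : F ⟶ G) [Epi f] : Epi ((Delta p).map f) := by
  have h := (cokernel.π (unitPre p)).naturality f
  haveI e1 : Epi ((preAdd p).map f) := preAdd_map_epi p f
  haveI e2 : Epi ((cokernel.π (unitPre p)).app G) := inferInstance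
  have h' : (cokernel.π (unitPre p)).app F ≫ (Delta p).map f
      = (preAdd p).map f ≫ (cokernel.π (unitPre p)).app G := h.symm
  haveI : Epi ((cokernel.π (unitPre p)).app F ≫ (Delta p).map f) := by
    rw [h']; exact @epi_comp _ _ _ _ _ _ e1 _ e2
  exact epi_of_epi ((cokernel.π (unitPre p)).app F) _

lemma delta_map_zero {F G : FF p} : (Delta p).map (0 : F ⟶ G) = 0 := by
  have h : (preAdd p).map (0 : F ⟶ G) ≫ (cokernel.π (unitPre p)).app G
      = (cokernel.π (unitPre p)).app F ≫ (Delta p).map (0 : F ⟶ G) :=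
    (cokernel.π (unitPre p)).naturality (0 : F ⟶ G)
  rw [preAdd_map_zero, zero_comp] at h
  haveI e : Epi ((cokernel.π (unitPre p)).app F) := inferInstance
  refine (cancel_epi ((cokernel.π (unitPre p)).app F)).mp ?_
  exact h.symm.trans comp_zero.symm

lemma deltaIter_map_epi (m : ℕ) {F G : FF p} (f : F ⟶ G) [Epi f] :
    Epi ((deltaIter p m).map f) := by
  induction m with
  | zero => exact (inferInstance : Epi f)
  | succ k ih =>
    haveI := ih
    exact delta_map_epi p ((deltaIter p k).map f)

lemma deltaIter_map_zero (m : ℕ) {F G : FF p} :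
    (deltaIter p m).map (0 : F ⟶ G) = 0 := by
  induction m with
  | zero => rfl
  | succ k ih =>
    show (Delta p).map ((deltaIter p k).map (0 : F ⟶ G)) = 0
    rw [ih, delta_map_zero]

lemma tensorRight_map_zero (M : FF p) {A B : FF p} :
    (tensorRight M).map (0 : A ⟶ B) = 0 := by
  show (0 : A ⟶ B) ▷ M = 0
  apply NatTrans.ext
  funext V
  show ((0 : A ⟶ B) ▷ M).app V = (0 : A ⊗ M ⟶ B ⊗ M).app V
  rw [Monoidal.whiskerRight_app]
  show (0 : A.obj V ⟶ B.obj V) ▷ M.obj V = (0 : A.obj V ⊗ M.obj V ⟶ B.obj V ⊗ M.obj V)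
  simp

lemma counit_comp_eq_zero (n : ℕ)
    (adj : tensorRight (objPow p (Pbar p) (n + 1)) ⊣ deltaIter p (n + 1))
    {F G : FF p} (hG : IsPolyLE p n G) (g : F ⟶ G) :
    adj.counit.app F ≫ g = 0 := by
  have hz : (deltaIter p (n + 1)).map g = 0 := hG.eq_of_tgt _ _
  have h : adj.counit.app F ≫ g
      = (deltaIter p (n + 1) ⋙ tensorRight (objPow p (Pbar p) (n + 1))).map g
        ≫ adj.counit.app G := (adj.counit.naturality g).symm
  rw [h]
  show (tensorRight (objPow p (Pbar p) (n + 1))).map ((deltaIter p (n + 1)).map g)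
      ≫ adj.counit.app G = 0
  rw [hz, tensorRight_map_zero, zero_comp]

lemma coker_counit_poly (n : ℕ)
    (adj : tensorRight (objPow p (Pbar p) (n + 1)) ⊣ deltaIter p (n + 1))
    (F : FF p) : IsPolyLE p n (cokernel (adj.counit.app F)) := by
  have ht : adj.unit.app ((deltaIter p (n + 1)).obj F)
      ≫ (deltaIter p (n + 1)).map (adj.counit.app F)
      = 𝟙 ((deltaIter p (n + 1)).obj F) :=
    adj.right_triangle_components F
  haveI hsplit : IsSplitEpi ((deltaIter p (n + 1)).map (adj.counit.app F)) :=
    IsSplitEpi.mk' ⟨adj.unit.app ((deltaIter p (n + 1)).obj F), ht⟩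
  haveI hepi1 : Epi ((deltaIter p (n + 1)).map (adj.counit.app F)) :=
    IsSplitEpi.epi _
  have h2 : (deltaIter p (n + 1)).map (adj.counit.app F)
      ≫ (deltaIter p (n + 1)).map (cokernel.π (adj.counit.app F)) = 0 := by
    rw [← (deltaIter p (n + 1)).map_comp, cokernel.condition]
    exact deltaIter_map_zero p (n + 1)
  have hpi0 : (deltaIter p (n + 1)).map (cokernel.π (adj.counit.app F)) = 0 := by
    rw [← cancel_epi ((deltaIter p (n + 1)).map (adj.counit.app F)), comp_zero]
    exact h2
  haveI hepi : Epi ((deltaIter p (n + 1)).map (cokernel.π (adj.counit.app F))) :=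
    deltaIter_map_epi p (n + 1) _
  rw [IsPolyLE, IsZero.iff_id_eq_zero]
  have hfin : (deltaIter p (n + 1)).map (cokernel.π (adj.counit.app F))
        ≫ 𝟙 ((deltaIter p (n + 1)).obj (cokernel (adj.counit.app F)))
      = (deltaIter p (n + 1)).map (cokernel.π (adj.counit.app F)) ≫ 0 := by
    rw [hpi0, zero_comp, zero_comp]
  exact (cancel_epi ((deltaIter p (n + 1)).map (cokernel.π (adj.counit.app F)))).mp hfin

/-- For every `F ∈ 𝓕` and `n ≥ 0`, and any adjunction between
`− ⊗ P̄^{⊗(n+1)}` and `Δ^{n+1}`, the quotient `coker(ε_F : Δ^{n+1}F ⊗ P̄^{⊗(n+1)} → F)`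
(with `ε` the counit of the adjunction) is polynomial of degree at most `n`, and every
morphism from `F` to a functor polynomial of degree at most `n` factors uniquely through
it; consequently the inclusion of the full subcategory of polynomial functors of degree
at most `n` admits a left adjoint. -/
theorem stmt_7 (p : ℕ) [Fact p.Prime] (n : ℕ) (F : FF p)
    (adj : tensorRight (objPow p (Pbar p) (n + 1)) ⊣ deltaIter p (n + 1)) :
    IsPolyLE p n (cokernel (adj.counit.app F)) ∧
    (∀ (G : FF p), IsPolyLE p n G → ∀ g : F ⟶ G,
      ∃! u : cokernel (adj.counit.app F) ⟶ G,
        cokernel.π (adj.counit.app F) ≫ u = g) ∧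
    (ObjectProperty.ι (IsPolyLE p n)).IsRightAdjoint := by
  refine ⟨coker_counit_poly p n adj F, ?_, ?_⟩
  · intro G hG g
    have hz := counit_comp_eq_zero p n adj hG g
    refine ⟨cokernel.desc _ g hz, cokernel.π_desc _ g hz, fun u hu => ?_⟩
    rw [← cancel_epi (cokernel.π (adj.counit.app F)), hu, cokernel.π_desc]
  · let Fobj : FF p → ObjectProperty.FullSubcategory (IsPolyLE p n) :=
      fun X => ⟨cokernel (adj.counit.app X), coker_counit_poly p n adj X⟩
    let e : ∀ (X : FF p) (Y : ObjectProperty.FullSubcategory (IsPolyLE p n)),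
        (Fobj X ⟶ Y) ≃ (X ⟶ (ObjectProperty.ι (IsPolyLE p n)).obj Y) :=
      fun X Y =>
      { toFun := fun u => cokernel.π (adj.counit.app X) ≫ u.hom
        invFun := fun g => ObjectProperty.homMk (cokernel.desc _ g
          (counit_comp_eq_zero p n adj Y.property g))
        left_inv := fun u => by
          apply ObjectProperty.hom_ext
          apply (cancel_epi (cokernel.π (adj.counit.app X))).mp
          exact cokernel.π_desc _ _ _
        right_inv := fun g => cokernel.π_desc _ g _ }
    have he : ∀ (X : FF p) (Y Y' : ObjectProperty.FullSubcategory (IsPolyLE p n)) (g : Y ⟶ Y')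
        (h : Fobj X ⟶ Y), e X Y' (h ≫ g) =
          e X Y h ≫ (ObjectProperty.ι (IsPolyLE p n)).map g := by
      intro X Y Y' g h
      simp only [e, Equiv.coe_fn_mk, ObjectProperty.ι_map]
      exact (Category.assoc _ _ _).symm
    exact (Adjunction.adjunctionOfEquivLeft e he).isRightAdjoint
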